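/- Let p be a prime number, λ₁ = (p + √(p²+16))/(4p), λ₂ = (p − √(p²+16))/(4p). Let (β_i)_{i≥0} be a sequence of integers, with β₀ and β₁ not both zero, satisfying |β_{i+1}| < (1/p²)|β_{i−1}| + (1/2)|β_i| for all i ≥ 1. Set C = 2|β₁|/(λ₁ − λ₂) + |β₀| and N = ⌊ −log C / log λ₁ ⌋. Then β_n = 0 for every n > N; in particular the set of indices n with β_n ≠ 0 is finite with at most N + 1 elements. -/

import Mathlib

/-- The `p`-adic Lamé theorem for Browkin continued fractions: if `(β_i)` is an
integer sequence, not vanishing in both of its first two terms, satisfying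
`|β_{i+1}| < (1/p²)|β_{i−1}| + (1/2)|β_i|` for all `i ≥ 1`, then with
`C = 2|β₁|/(λ₁−λ₂) + |β₀|` and `N = ⌊−log C / log λ₁⌋` one has `β_n = 0` for all
`n > N`; in particular `{n | β_n ≠ 0}` is finite with at most `N + 1` elements. -/
theorem stmt_7 (p : ℕ) (hp : p.Prime)
    (lam1 lam2 : ℝ)
    (hlam1 : lam1 = ((p : ℝ) + Real.sqrt ((p : ℝ)^2 + 16)) / (4 * p))
    (hlam2 : lam2 = ((p : ℝ) - Real.sqrt ((p : ℝ)^2 + 16)) / (4 * p))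
    (β : ℕ → ℤ) (hβ0 : ¬(β 0 = 0 ∧ β 1 = 0))
    (hβ : ∀ i : ℕ, 1 ≤ i →
      |(β (i + 1) : ℝ)| < (1/(p : ℝ)^2) * |(β (i - 1) : ℝ)| + (1/2) * |(β i : ℝ)|)
    (C : ℝ) (hC : C = 2 * |(β 1 : ℝ)| / (lam1 - lam2) + |(β 0 : ℝ)|)
    (N : ℤ) (hN : N = ⌊-Real.log C / Real.log lam1⌋) :
    (∀ n : ℕ, N < (n : ℤ) → β n = 0) ∧
    {n : ℕ | β n ≠ 0}.Finite ∧ ({n : ℕ | β n ≠ 0}.ncard : ℤ) ≤ N + 1 := by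
  have hp2 : (2:ℝ) ≤ (p:ℝ) := by exact_mod_cast hp.two_le
  have hppos : (0:ℝ) < p := by linarith
  have hpne : (p:ℝ) ≠ 0 := ne_of_gt hppos
  set s : ℝ := Real.sqrt ((p : ℝ)^2 + 16) with hs
  have hs2 : s ^ 2 = (p:ℝ)^2 + 16 := Real.sq_sqrt (by positivity)
  have hs0 : 0 < s := Real.sqrt_pos.mpr (by positivity)
  have hsgt : (p:ℝ) < s := by nlinarith
  have hslt : s < 3 * p := by nlinarith
  have hl1pos : 0 < lam1 := by rw [hlam1]; positivity
  have hl1lt : lam1 < 1 := by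
    rw [hlam1, div_lt_one (by positivity)]; linarith
  have hDeq : lam1 - lam2 = s / (2 * p) := by
    rw [hlam1, hlam2]; field_simp; ring
  have hD : 0 < lam1 - lam2 := by rw [hDeq]; positivity
  have hsum : lam1 + lam2 = 1/2 := by
    rw [hlam1, hlam2]; field_simp; ring
  have hid : 1/(p:ℝ)^2 + lam1/2 = lam1^2 := by
    rw [hlam1]; field_simp; linear_combination (-2) * hs2
  have hC0 : 0 < C := by
    rcases eq_or_ne (β 0) 0 with h0 | h0
    · have h1 : β 1 ≠ 0 := fun h => hβ0 ⟨h0, h⟩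
      have h1' : (1:ℝ) ≤ |(β 1 : ℝ)| := by
        have := Int.one_le_abs h1
        push_cast [← Int.cast_abs]; exact_mod_cast this
      have : 0 < 2 * |(β 1 : ℝ)| / (lam1 - lam2) := by positivity
      rw [hC]; have := abs_nonneg ((β 0 : ℝ)); linarith
    · have h0' : (1:ℝ) ≤ |(β 0 : ℝ)| := by
        have := Int.one_le_abs h0
        push_cast [← Int.cast_abs]; exact_mod_cast this
      have : 0 ≤ 2 * |(β 1 : ℝ)| / (lam1 - lam2) := by positivity
      rw [hC]; linarith
  -- key bound
  have hCeq : C * (lam1 - lam2) = 2 * |(β 1 : ℝ)| + |(β 0 : ℝ)| * (lam1 - lam2) := by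
    rw [hC]; field_simp
  have key : ∀ i : ℕ, |(β i : ℝ)| ≤ C * lam1 ^ i := by
    intro i
    induction i using Nat.strong_induction_on with
    | _ i ih =>
      match i with
      | 0 =>
        rw [pow_zero, mul_one, hC]
        have : 0 ≤ 2 * |(β 1 : ℝ)| / (lam1 - lam2) := by positivity
        linarith
      | 1 =>
        have hCeq2 : C * (lam1 - lam2) * lam1
            = (2 * |(β 1 : ℝ)| + |(β 0 : ℝ)| * (lam1 - lam2)) * lam1 := by
          rw [hCeq]
        rw [pow_one]
        nlinarith [abs_nonneg ((β 1 : ℝ)), abs_nonneg ((β 0 : ℝ)),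
          mul_pos hD hl1pos, mul_nonneg (mul_nonneg (abs_nonneg ((β 0:ℝ))) hD.le) hl1pos.le]
      | (k+2) =>
        have h1 := ih k (by omega)
        have h2 := ih (k+1) (by omega)
        have h3 := hβ (k+1) (by omega)
        simp only [Nat.add_sub_cancel] at h3
        have hpk : (0:ℝ) ≤ lam1 ^ k := pow_nonneg hl1pos.le k
        have b1 : (1/(p:ℝ)^2) * |(β k : ℝ)| ≤ (1/(p:ℝ)^2) * (C * lam1 ^ k) :=
          mul_le_mul_of_nonneg_left h1 (by positivity)
        have b2 : (1/2 : ℝ) * |(β (k+1) : ℝ)| ≤ (1/2) * (C * lam1 ^ (k+1)) :=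
          mul_le_mul_of_nonneg_left h2 (by norm_num)
        have heq : (1/(p:ℝ)^2) * (C * lam1 ^ k) + (1/2) * (C * lam1 ^ (k+1))
            = C * lam1 ^ (k+2) := by
          rw [pow_succ, pow_succ, pow_succ]
          linear_combination (C * lam1 ^ k) * hid
        linarith
  have hlog : Real.log lam1 < 0 := Real.log_neg hl1pos hl1lt
  have part1 : ∀ n : ℕ, N < (n : ℤ) → β n = 0 := by
    intro n hn
    have hfl : -Real.log C / Real.log lam1 < (N : ℝ) + 1 := by
      rw [hN]; exact Int.lt_floor_add_one _
    have hnn : (N : ℝ) + 1 ≤ (n : ℝ) := by exact_mod_cast hn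
    have hlt : -Real.log C / Real.log lam1 < (n : ℝ) := lt_of_lt_of_le hfl hnn
    have hmul : (n : ℝ) * Real.log lam1 < -Real.log C := by
      have := mul_lt_mul_of_neg_right hlt hlog
      rwa [div_mul_cancel₀ _ (ne_of_lt hlog)] at this
    have hlogs : Real.log (C * lam1 ^ n) < 0 := by
      rw [Real.log_mul (ne_of_gt hC0) (by positivity), Real.log_pow]
      linarith
    have hlt1 : C * lam1 ^ n < 1 := by
      have hpos : 0 < C * lam1 ^ n := by positivity
      exact (Real.log_neg_iff hpos).mp hlogs
    have : |(β n : ℝ)| < 1 := lt_of_le_of_lt (key n) hlt1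
    rw [abs_lt] at this
    have h1 : (-1 : ℤ) < β n := by exact_mod_cast this.1
    have h2 : β n < 1 := by exact_mod_cast this.2
    omega
  have hNnn : 0 ≤ N := by
    by_contra h
    push_neg at h
    exact hβ0 ⟨part1 0 (by omega), part1 1 (by omega)⟩
  have hsub : {n : ℕ | β n ≠ 0} ⊆ ↑(Finset.range (N.toNat + 1)) := by
    intro n hn
    simp only [Finset.coe_range, Set.mem_Iio]
    by_contra hnlt
    push_neg at hnlt
    exact hn (part1 n (by omega))
  refine ⟨part1, (Finset.range (N.toNat + 1)).finite_toSet.subset hsub, ?_⟩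
  have := Set.ncard_le_ncard hsub (Finset.range (N.toNat + 1)).finite_toSet
  rw [Set.ncard_coe_finset, Finset.card_range] at this
  omega
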